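/- Let a ≥ 0 and b ≥ 0 be real numbers such that tanh²(a) ≥ tanh(b). Then all four coefficients in the expansion of the local Boltzmann factor exp(a·(s1+s2) − b·s1·s2) over s1, s2 ∈ {−1,1} are non-negative; explicitly: cosh²(a)·cosh(b) − sinh²(a)·sinh(b) > 0, cosh(a)·sinh(a)·(cosh(b) − sinh(b)) ≥ 0, and sinh²(a)·cosh(b) − cosh²(a)·sinh(b) ≥ 0. -/
import Mathlib


open Real

theorem stmt_2 (a b : ℝ) (ha : 0 ≤ a) (hb : 0 ≤ b)
    (h : Real.tanh a ^ 2 ≥ Real.tanh b) :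
    0 < Real.cosh a ^ 2 * Real.cosh b - Real.sinh a ^ 2 * Real.sinh b ∧
    0 ≤ Real.cosh a * Real.sinh a * (Real.cosh b - Real.sinh b) ∧
    0 ≤ Real.sinh a ^ 2 * Real.cosh b - Real.cosh a ^ 2 * Real.sinh b := by
  have hca : 0 < Real.cosh a := Real.cosh_pos a
  have hcb : 0 < Real.cosh b := Real.cosh_pos b
  have hsa : 0 ≤ Real.sinh a := Real.sinh_nonneg_iff.mpr ha
  have hsb : 0 ≤ Real.sinh b := Real.sinh_nonneg_iff.mpr hb
  have hlt : Real.sinh b < Real.cosh b := Real.sinh_lt_cosh b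
  have hsc : Real.sinh a ≤ Real.cosh a := (Real.sinh_lt_cosh a).le
  refine ⟨?_, ?_, ?_⟩
  · have h1 : Real.sinh a ^ 2 * Real.sinh b ≤ Real.cosh a ^ 2 * Real.sinh b := by
      apply mul_le_mul_of_nonneg_right _ hsb
      exact pow_le_pow_left₀ hsa hsc 2
    have h2 : Real.cosh a ^ 2 * Real.sinh b < Real.cosh a ^ 2 * Real.cosh b := by
      apply mul_lt_mul_of_pos_left hlt (by positivity)
    linarith
  · have := hlt.le
    have : 0 ≤ Real.cosh b - Real.sinh b := by linarith
    positivity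
  · have ht : Real.tanh a = Real.sinh a / Real.cosh a := Real.tanh_eq_sinh_div_cosh a
    have htb : Real.tanh b = Real.sinh b / Real.cosh b := Real.tanh_eq_sinh_div_cosh b
    rw [ht, htb, div_pow, ge_iff_le, div_le_div_iff₀ hcb (by positivity)] at h
    nlinarith
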